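/- Let A = [a_{ijk}] be an n×n×n ASHM and L(A) = [l_{ij}] = ∑_{k=1}^n k·A_k its ASHM-Latin square. Then for all i, j: 1 ≤ l_{ij} ≤ n. Moreover, if the nonzero entries of the vertical line (a_{ij1},…,a_{ijn}) occur at positions k_1 < k_2 < … < k_p, then l_{ij} ≥ k_1 + (p−1)/2 and l_{ij} ≤ k_p − (p−1)/2; in particular if l_{ij} = 1 then a_{ij1} = 1 and a_{ijk} = 0 for k > 1, and if l_{ij} = n then a_{ijn} = 1 and a_{ijk} = 0 for k < n. -/

import Mathlib

open Finset

/-- A line (vector) of integers is "alternating" in the ASM sense: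
all prefix sums are 0 or 1, and the total sum is 1. This is equivalent to the
nonzero entries being ±1, alternating in sign, beginning and ending with +1. -/
def AltLine {n : ℕ} (v : Fin n → ℤ) : Prop :=
  (∀ t : Fin n, (∑ s ∈ Finset.univ.filter (fun s => s ≤ t), v s) = 0 ∨
      (∑ s ∈ Finset.univ.filter (fun s => s ≤ t), v s) = 1) ∧
  (∑ s, v s) = 1

/-- Alternating sign matrix. -/
def IsAsm {n : ℕ} (A : Matrix (Fin n) (Fin n) ℤ) : Prop :=
  (∀ i, AltLine (fun j => A i j)) ∧ (∀ j, AltLine (fun i => A i j))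

/-- Alternating sign hypermatrix: every line in each of the three directions alternates. -/
def IsAshm {n : ℕ} (A : Fin n → Fin n → Fin n → ℤ) : Prop :=
  (∀ j k, AltLine (fun i => A i j k)) ∧
  (∀ i k, AltLine (fun j => A i j k)) ∧
  (∀ i j, AltLine (fun k => A i j k))

/-- The ASHM-Latin square `L(A) = 1·A₁ + 2·A₂ + ⋯ + n·Aₙ` (planes indexed from 1). -/
def Lmat {n : ℕ} (A : Fin n → Fin n → Fin n → ℤ) (i j : Fin n) : ℤ :=
  ∑ k : Fin n, ((k.1 : ℤ) + 1) * A i j k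

/-- The set of positions of nonzero entries in the vertical line through (i,j). -/
def nzSet {n : ℕ} (A : Fin n → Fin n → Fin n → ℤ) (i j : Fin n) : Finset (Fin n) :=
  Finset.univ.filter (fun k => A i j k ≠ 0)

def wfun {n : ℕ} (v : Fin n → ℤ) (k : ℕ) : ℤ :=
  if h : k < n then v ⟨k, h⟩ else 0

def Sfun {n : ℕ} (v : Fin n → ℤ) (t : ℕ) : ℤ :=
  ∑ s ∈ Finset.range t, wfun v s

lemma Sfun_eq {n : ℕ} (v : Fin n → ℤ) {t : ℕ} (ht : t ≤ n) :
    Sfun v t = ∑ s ∈ univ.filter (fun s : Fin n => s.1 < t), v s := by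
  have h1 : (range n).filter (fun k => k < t) = range t := by
    ext k; simp; omega
  calc Sfun v t = ∑ k ∈ (range n).filter (fun k => k < t), wfun v k := by
        rw [h1]; rfl
    _ = ∑ k ∈ range n, if k < t then wfun v k else 0 := Finset.sum_filter _ _
    _ = ∑ s : Fin n, (if (s : ℕ) < t then wfun v (s : ℕ) else 0) :=
        (Fin.sum_univ_eq_sum_range (fun k => if k < t then wfun v k else 0) n).symm
    _ = ∑ s : Fin n, (if (s : ℕ) < t then v s else 0) := by
        apply Finset.sum_congr rfl; intro s _
        simp [wfun, s.isLt]
    _ = ∑ s ∈ univ.filter (fun s : Fin n => s.1 < t), v s := (Finset.sum_filter _ _).symm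

lemma Sfun_stab {n : ℕ} (v : Fin n → ℤ) : ∀ t, n ≤ t → Sfun v t = Sfun v n := by
  intro t ht
  induction t, ht using Nat.le_induction with
  | base => rfl
  | succ m hm ih =>
      rw [Sfun, Finset.sum_range_succ, ← Sfun, ih]
      have : wfun v m = 0 := dif_neg (by omega)
      rw [this, add_zero]

lemma Sfun_n {n : ℕ} (v : Fin n → ℤ) (hv : AltLine v) : Sfun v n = 1 := by
  rw [Sfun_eq v le_rfl]
  have : univ.filter (fun s : Fin n => s.1 < n) = univ := by
    apply Finset.filter_true_of_mem; intro s _; exact s.isLt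
  rw [this]; exact hv.2

lemma Sfun01 {n : ℕ} (v : Fin n → ℤ) (hv : AltLine v) (t : ℕ) :
    Sfun v t = 0 ∨ Sfun v t = 1 := by
  rcases Nat.eq_zero_or_pos t with h0 | h0
  · left; simp [h0, Sfun]
  rcases le_or_gt t n with hle | hlt
  · have ht' : t - 1 < n := by omega
    have := hv.1 ⟨t - 1, ht'⟩
    have hfe : univ.filter (fun s : Fin n => s.1 < t)
        = univ.filter (fun s : Fin n => s ≤ (⟨t - 1, ht'⟩ : Fin n)) := by
      ext s; simp [Fin.le_def]; omega
    rw [Sfun_eq v hle, hfe]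
    exact this
  · rw [Sfun_stab v t (le_of_lt hlt), Sfun_n v hv]; right; rfl

lemma Sfun_succ {n : ℕ} (v : Fin n → ℤ) (t : ℕ) :
    Sfun v (t + 1) = Sfun v t + wfun v t := Finset.sum_range_succ _ _

lemma L_eq {n : ℕ} (v : Fin n → ℤ) (hv : AltLine v) :
    ∑ k : Fin n, ((k.1 : ℤ) + 1) * v k = ∑ t ∈ range n, (1 - Sfun v t) := by
  have step1 : ∀ t ∈ range n, (1 : ℤ) - Sfun v t
      = ∑ k ∈ range n, (if t ≤ k then wfun v k else 0) := by
    intro t ht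
    simp only [mem_range] at ht
    have hfilt : (range n).filter (fun k => t ≤ k) = Ico t n := by
      ext k; simp; omega
    rw [← Finset.sum_filter, hfilt, Finset.sum_Ico_eq_sub _ (le_of_lt ht)]
    have : Sfun v n = 1 := Sfun_n v hv
    show (1 : ℤ) - Sfun v t = Sfun v n - Sfun v t
    rw [this]
  rw [Finset.sum_congr rfl step1, Finset.sum_comm]
  have step2 : ∀ k ∈ range n, (∑ t ∈ range n, if t ≤ k then wfun v k else 0)
      = ((k : ℤ) + 1) * wfun v k := by
    intro k hk
    simp only [mem_range] at hk
    have hfilt : (range n).filter (fun t => t ≤ k) = range (k + 1) := by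
      ext t; simp; omega
    rw [← Finset.sum_filter, hfilt, Finset.sum_const, Finset.card_range]
    push_cast [nsmul_eq_mul]
    ring
  rw [Finset.sum_congr rfl step2,
    ← Fin.sum_univ_eq_sum_range (fun k => ((k : ℤ) + 1) * wfun v k) n]
  apply Finset.sum_congr rfl; intro s _
  simp [wfun, s.isLt]

def Lv {n : ℕ} (v : Fin n → ℤ) : ℤ := ∑ k : Fin n, ((k.1 : ℤ) + 1) * v k
def Nv {n : ℕ} (v : Fin n → ℤ) : Finset (Fin n) := univ.filter (fun k => v k ≠ 0)
def Zv {n : ℕ} (v : Fin n → ℤ) : Finset ℕ := (range n).filter (fun t => Sfun v t = 0)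
def Ov {n : ℕ} (v : Fin n → ℤ) : Finset ℕ := (range n).filter (fun t => Sfun v t = 1)
def Miv {n : ℕ} (v : Fin n → ℤ) : Finset (Fin n) := univ.filter (fun k => v k = -1)
def Plv {n : ℕ} (v : Fin n → ℤ) : Finset (Fin n) := univ.filter (fun k => v k = 1)

lemma wfun_val {n : ℕ} (v : Fin n → ℤ) (k : Fin n) : wfun v k.1 = v k := by
  simp [wfun, k.isLt]

lemma L_card {n : ℕ} (v : Fin n → ℤ) (hv : AltLine v) : Lv v = ((Zv v).card : ℤ) := by
  rw [Lv, L_eq v hv]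
  have : ∀ t ∈ range n, (1 : ℤ) - Sfun v t = if Sfun v t = 0 then 1 else 0 := by
    intro t _
    rcases Sfun01 v hv t with h | h <;> simp [h]
  rw [Finset.sum_congr rfl this, Finset.sum_boole]
  rfl

lemma ZO_card {n : ℕ} (v : Fin n → ℤ) (hv : AltLine v) :
    (Zv v).card + (Ov v).card = n := by
  have hdisj : Disjoint (Zv v) (Ov v) := by
    rw [Zv, Ov, Finset.disjoint_filter]
    intro t _ h0 h1
    omega
  have hunion : Zv v ∪ Ov v = range n := by
    ext t
    simp only [Zv, Ov, mem_union, mem_filter, mem_range]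
    constructor
    · rintro (⟨h, _⟩ | ⟨h, _⟩) <;> exact h
    · intro h
      rcases Sfun01 v hv t with h0 | h0
      · exact Or.inl ⟨h, h0⟩
      · exact Or.inr ⟨h, h0⟩
  rw [← Finset.card_union_of_disjoint hdisj, hunion, Finset.card_range]

lemma vval {n : ℕ} (v : Fin n → ℤ) (hv : AltLine v) (k : Fin n) :
    v k = -1 ∨ v k = 0 ∨ v k = 1 := by
  have h1 := Sfun01 v hv k.1
  have h2 := Sfun01 v hv (k.1 + 1)
  have h3 := Sfun_succ v k.1
  rw [wfun_val] at h3
  omega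

lemma card_PM {n : ℕ} (v : Fin n → ℤ) (hv : AltLine v) :
    (Plv v).card = (Miv v).card + 1 := by
  have h : (∑ k : Fin n, v k)
      = ∑ k : Fin n, ((if v k = 1 then (1 : ℤ) else 0) - (if v k = -1 then 1 else 0)) := by
    apply Finset.sum_congr rfl
    intro k _
    rcases vval v hv k with h | h | h <;> simp [h]
  rw [hv.2] at h
  rw [Finset.sum_sub_distrib, Finset.sum_boole, Finset.sum_boole] at h
  have : ((Plv v).card : ℤ) = (Miv v).card + 1 := by
    rw [Plv, Miv]; omega
  exact_mod_cast this

lemma card_N {n : ℕ} (v : Fin n → ℤ) (hv : AltLine v) :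
    (Nv v).card = 2 * (Miv v).card + 1 := by
  have hdisj : Disjoint (Plv v) (Miv v) := by
    rw [Plv, Miv, Finset.disjoint_filter]; intro k _ h1 h2; omega
  have hunion : Plv v ∪ Miv v = Nv v := by
    ext k
    simp only [Plv, Miv, Nv, mem_union, mem_filter, mem_univ, true_and]
    rcases vval v hv k with h | h | h <;> simp [h]
  rw [← hunion, Finset.card_union_of_disjoint hdisj, card_PM v hv]
  ring

lemma minus_S {n : ℕ} (v : Fin n → ℤ) (hv : AltLine v) (q : Fin n) (hq : v q = -1) :
    Sfun v q.1 = 1 ∧ Sfun v (q.1 + 1) = 0 ∧ q.1 + 1 < n := by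
  have h1 := Sfun01 v hv q.1
  have h2 := Sfun01 v hv (q.1 + 1)
  have h3 := Sfun_succ v q.1
  rw [wfun_val, hq] at h3
  have hq1 : Sfun v q.1 = 1 := by omega
  have hq2 : Sfun v (q.1 + 1) = 0 := by omega
  refine ⟨hq1, hq2, ?_⟩
  by_contra h
  have : q.1 + 1 = n := by have := q.isLt; omega
  have h5 := Sfun_n v hv
  rw [this] at hq2
  omega

lemma Miv_sub_Nv {n : ℕ} (v : Fin n → ℤ) : Miv v ⊆ Nv v := by
  intro q hq
  have := (Finset.mem_filter.mp hq).2
  exact Finset.mem_filter.mpr ⟨mem_univ _, by rw [this]; norm_num⟩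

lemma lower {n : ℕ} (v : Fin n → ℤ) (hv : AltLine v) (hne : (Nv v).Nonempty) :
    ((Nv v).min' hne).1 + 1 + (Miv v).card ≤ (Zv v).card := by
  set k₁ := (Nv v).min' hne with hk₁
  have hsub1 : range (k₁.1 + 1) ⊆ Zv v := by
    intro t ht
    simp only [mem_range] at ht
    have htn : t < n := lt_of_le_of_lt (by omega : t ≤ k₁.1) k₁.isLt
    refine Finset.mem_filter.mpr ⟨mem_range.mpr htn, ?_⟩
    apply Finset.sum_eq_zero
    intro s hs
    simp only [mem_range] at hs
    have hsn : s < n := by omega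
    rw [wfun, dif_pos hsn]
    by_contra hne0
    have hmem : (⟨s, hsn⟩ : Fin n) ∈ Nv v := Finset.mem_filter.mpr ⟨mem_univ _, hne0⟩
    have hle := Fin.le_def.mp ((Nv v).min'_le _ hmem)
    simp only [← hk₁] at hle
    omega
  have hsub2 : (Miv v).image (fun q : Fin n => q.1 + 1) ⊆ Zv v := by
    intro t ht
    simp only [mem_image] at ht
    obtain ⟨q, hq, rfl⟩ := ht
    have hq' : v q = -1 := (Finset.mem_filter.mp hq).2
    obtain ⟨_, h0, hlt⟩ := minus_S v hv q hq'
    exact Finset.mem_filter.mpr ⟨mem_range.mpr hlt, h0⟩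
  have hdisj : Disjoint (range (k₁.1 + 1)) ((Miv v).image (fun q : Fin n => q.1 + 1)) := by
    rw [Finset.disjoint_left]
    intro t ht hti
    simp only [mem_range] at ht
    simp only [mem_image] at hti
    obtain ⟨q, hq, rfl⟩ := hti
    have hle := Fin.le_def.mp ((Nv v).min'_le q (Miv_sub_Nv v hq))
    simp only [← hk₁] at hle
    omega
  have hcard : ((Miv v).image (fun q : Fin n => q.1 + 1)).card = (Miv v).card :=
    Finset.card_image_of_injective _ (fun a b h => Fin.ext (by omega))
  have hle := Finset.card_le_card (Finset.union_subset hsub1 hsub2)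
  rw [Finset.card_union_of_disjoint hdisj, Finset.card_range, hcard] at hle
  omega

lemma upper {n : ℕ} (v : Fin n → ℤ) (hv : AltLine v) (hne : (Nv v).Nonempty) :
    (n - ((Nv v).max' hne).1 - 1) + (Miv v).card ≤ (Ov v).card := by
  set kp := (Nv v).max' hne with hkp
  have hsub1 : Ico (kp.1 + 1) n ⊆ Ov v := by
    intro t ht
    rw [mem_Ico] at ht
    refine Finset.mem_filter.mpr ⟨mem_range.mpr ht.2, ?_⟩
    have hzero : ∑ s ∈ Ico t n, wfun v s = 0 := by
      apply Finset.sum_eq_zero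
      intro s hs
      rw [mem_Ico] at hs
      rw [wfun, dif_pos hs.2]
      by_contra hne0
      have hmem : (⟨s, hs.2⟩ : Fin n) ∈ Nv v := Finset.mem_filter.mpr ⟨mem_univ _, hne0⟩
      have hle := Fin.le_def.mp ((Nv v).le_max' _ hmem)
      simp only [← hkp] at hle
      omega
    have hsub := Finset.sum_Ico_eq_sub (wfun v) (le_of_lt ht.2)
    rw [hzero] at hsub
    have h1 := Sfun_n v hv
    have h2 : Sfun v n = ∑ s ∈ range n, wfun v s := rfl
    have h3 : Sfun v t = ∑ s ∈ range t, wfun v s := rfl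
    show Sfun v t = 1
    omega
  have hsub2 : (Miv v).image (fun q : Fin n => q.1) ⊆ Ov v := by
    intro t ht
    simp only [mem_image] at ht
    obtain ⟨q, hq, rfl⟩ := ht
    have hq' : v q = -1 := (Finset.mem_filter.mp hq).2
    obtain ⟨h1, _, _⟩ := minus_S v hv q hq'
    exact Finset.mem_filter.mpr ⟨mem_range.mpr q.isLt, h1⟩
  have hdisj : Disjoint (Ico (kp.1 + 1) n) ((Miv v).image (fun q : Fin n => q.1)) := by
    rw [Finset.disjoint_left]
    intro t ht hti
    rw [mem_Ico] at ht
    simp only [mem_image] at hti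
    obtain ⟨q, hq, rfl⟩ := hti
    have hle := Fin.le_def.mp ((Nv v).le_max' q (Miv_sub_Nv v hq))
    simp only [← hkp] at hle
    omega
  have hcard : ((Miv v).image (fun q : Fin n => q.1)).card = (Miv v).card :=
    Finset.card_image_of_injective _ Fin.val_injective
  have hle := Finset.card_le_card (Finset.union_subset hsub1 hsub2)
  rw [Finset.card_union_of_disjoint hdisj, Nat.card_Ico, hcard] at hle
  omega

lemma Nv_ne {n : ℕ} (v : Fin n → ℤ) (hv : AltLine v) : (Nv v).Nonempty := by
  by_contra h
  rw [Finset.not_nonempty_iff_eq_empty, Nv, Finset.filter_eq_empty_iff] at h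
  have : (∑ s, v s) = 0 := Finset.sum_eq_zero (fun k hk => by
    have := h hk; simpa using this)
  rw [hv.2] at this
  exact one_ne_zero this

lemma m_zero {n : ℕ} (v : Fin n → ℤ) (hv : AltLine v) (hm : (Miv v).card = 0) :
    ∃ a : Fin n, Nv v = {a} ∧ v a = 1 ∧ ∀ k, k ≠ a → v k = 0 := by
  have hc : (Nv v).card = 1 := by rw [card_N v hv, hm]
  obtain ⟨a, ha⟩ := Finset.card_eq_one.mp hc
  have hall : ∀ k, k ≠ a → v k = 0 := by
    intro k hk
    by_contra h
    have : k ∈ Nv v := Finset.mem_filter.mpr ⟨mem_univ _, h⟩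
    rw [ha, mem_singleton] at this
    exact hk this
  refine ⟨a, ha, ?_, hall⟩
  have : (∑ s, v s) = v a :=
    Finset.sum_eq_single a (fun b _ hb => hall b hb) (fun h => absurd (mem_univ a) h)
  rw [hv.2] at this
  exact this.symm


theorem stmt5 {n : ℕ} (hn : 0 < n) (A : Fin n → Fin n → Fin n → ℤ)
    (hA : IsAshm A) (i j : Fin n) :
    (1 ≤ Lmat A i j ∧ Lmat A i j ≤ (n : ℤ)) ∧
    (∀ hS : (nzSet A i j).Nonempty,
      ((((nzSet A i j).min' hS).1 + 1 + ((nzSet A i j).card - 1) / 2 : ℕ) : ℤ)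
          ≤ Lmat A i j ∧
      Lmat A i j ≤
        ((((nzSet A i j).max' hS).1 + 1 : ℕ) : ℤ)
          - ((((nzSet A i j).card - 1) / 2 : ℕ) : ℤ)) ∧
    (Lmat A i j = 1 →
      A i j ⟨0, hn⟩ = 1 ∧ ∀ k : Fin n, k.1 ≠ 0 → A i j k = 0) ∧
    (Lmat A i j = (n : ℤ) →
      A i j ⟨n - 1, by omega⟩ = 1 ∧ ∀ k : Fin n, k.1 ≠ n - 1 → A i j k = 0) := by
  set v : Fin n → ℤ := fun k => A i j k with hvdef
  have hv : AltLine v := hA.2.2 i j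
  have hLv : Lmat A i j = Lv v := rfl
  have hNv : nzSet A i j = Nv v := rfl
  have hLcard := L_card v hv
  have hZO := ZO_card v hv
  have hne := Nv_ne v hv
  have hcardN := card_N v hv
  have hlow := lower v hv hne
  have hup := upper v hv hne
  have hkp := ((Nv v).max' hne).isLt
  have hk1 := ((Nv v).min' hne).isLt
  have hZne : 1 ≤ (Zv v).card := by
    have h0 : 0 ∈ Zv v := by
      refine Finset.mem_filter.mpr ⟨mem_range.mpr hn, ?_⟩
      simp [Sfun]
    exact Finset.card_pos.mpr ⟨0, h0⟩
  have hdiv : ((Nv v).card - 1) / 2 = (Miv v).card := by omega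
  refine ⟨⟨?_, ?_⟩, ?_, ?_, ?_⟩
  · rw [hLv, hLcard]; exact_mod_cast hZne
  · rw [hLv, hLcard]
    have : (Zv v).card ≤ n := by omega
    exact_mod_cast this
  · intro hS
    have hmin : (nzSet A i j).min' hS = (Nv v).min' hne := rfl
    have hmax : (nzSet A i j).max' hS = (Nv v).max' hne := rfl
    have hcc : (nzSet A i j).card = (Nv v).card := rfl
    rw [hmin, hmax, hcc]
    constructor
    · rw [hLv, hLcard, hdiv]
      exact_mod_cast hlow
    · rw [hLv, hLcard, hdiv]
      push_cast
      omega
  · intro hL1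
    rw [hLv, hLcard] at hL1
    have hZ1 : (Zv v).card = 1 := by exact_mod_cast hL1
    rw [hZ1] at hlow
    have hm0 : (Miv v).card = 0 := by omega
    have hk10 : ((Nv v).min' hne).1 = 0 := by omega
    obtain ⟨a, haN, hva, hall⟩ := m_zero v hv hm0
    have hxa : ∀ x ∈ Nv v, x = a := by
      intro x hx
      rw [haN] at hx
      exact mem_singleton.mp hx
    have hamem : (Nv v).min' hne = a := hxa _ ((Nv v).min'_mem hne)
    have ha0 : a = (⟨0, hn⟩ : Fin n) := by
      apply Fin.ext
      rw [hamem] at hk10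
      exact hk10
    constructor
    · show v ⟨0, hn⟩ = 1
      rw [← ha0]; exact hva
    · intro k hk
      apply hall
      intro hka
      rw [hka, ha0] at hk
      exact hk rfl
  · intro hLn
    rw [hLv, hLcard] at hLn
    have hZn : (Zv v).card = n := by exact_mod_cast hLn
    have hO0 : (Ov v).card = 0 := by omega
    rw [hO0] at hup
    have hm0 : (Miv v).card = 0 := by omega
    have hkpn : ((Nv v).max' hne).1 = n - 1 := by omega
    obtain ⟨a, haN, hva, hall⟩ := m_zero v hv hm0
    have hxa : ∀ x ∈ Nv v, x = a := by
      intro x hx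
      rw [haN] at hx
      exact mem_singleton.mp hx
    have hamem : (Nv v).max' hne = a := hxa _ ((Nv v).max'_mem hne)
    have ha0 : a = (⟨n - 1, by omega⟩ : Fin n) := by
      apply Fin.ext
      rw [hamem] at hkpn
      exact hkpn
    constructor
    · show v ⟨n - 1, by omega⟩ = 1
      rw [← ha0]; exact hva
    · intro k hk
      apply hall
      intro hka
      rw [hka, ha0] at hk
      exact hk rfl
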